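/- Let E be a directed graph, K a field, and suppose the Leavitt path algebra L_K(E) with its natural ℤ-grading is graded exchange: for every homogeneous x ∈ L_K(E) there is an idempotent u ∈ L_K(E)₀ with u ∈ x·L_K(E) and u ∈ x ∘ L_K(E) (where x ∘ y = x + y − xy). Then E is a no-exit graph: no cycle in E has an exit. -/

import Mathlib

/-! Leavitt path algebra of a directed graph, defined as a `RingQuot` of the
free algebra on vertices, edges and ghost edges. -/

structure LPAGraph where
  V : Type
  E : Type
  s : E → V
  r : E → V

namespace LPAGraph

inductive Gen (G : LPAGraph)
  | vert : G.V → Gen G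
  | edge : G.E → Gen G
  | ghost : G.E → Gen G

variable (K : Type) [Field K] (G : LPAGraph)

open FreeAlgebra in
/-- The Leavitt path algebra relations. -/
inductive Rel : FreeAlgebra K (Gen G) → FreeAlgebra K (Gen G) → Prop
  | vv {u w : G.V} (h : u ≠ w) :
      Rel (ι K (Gen.vert u) * ι K (Gen.vert w)) 0
  | v_idem (u : G.V) :
      Rel (ι K (Gen.vert u) * ι K (Gen.vert u)) (ι K (Gen.vert u))
  | se (e : G.E) : Rel (ι K (Gen.vert (G.s e)) * ι K (Gen.edge e)) (ι K (Gen.edge e))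
  | er (e : G.E) : Rel (ι K (Gen.edge e) * ι K (Gen.vert (G.r e))) (ι K (Gen.edge e))
  | rg (e : G.E) : Rel (ι K (Gen.vert (G.r e)) * ι K (Gen.ghost e)) (ι K (Gen.ghost e))
  | gs (e : G.E) : Rel (ι K (Gen.ghost e) * ι K (Gen.vert (G.s e))) (ι K (Gen.ghost e))
  | ck1_ne {e f : G.E} (h : e ≠ f) :
      Rel (ι K (Gen.ghost e) * ι K (Gen.edge f)) 0
  | ck1 (e : G.E) :
      Rel (ι K (Gen.ghost e) * ι K (Gen.edge e)) (ι K (Gen.vert (G.r e)))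
  | ck2 (v : G.V) (hfin : {e : G.E | G.s e = v}.Finite)
      (hne : {e : G.E | G.s e = v}.Nonempty) :
      Rel (ι K (Gen.vert v))
        (hfin.toFinset.sum fun e => ι K (Gen.edge e) * ι K (Gen.ghost e))

/-- The Leavitt path algebra (inside its canonical unital envelope). -/
abbrev L := RingQuot (Rel K G)

/-- The image of a vertex in the Leavitt path algebra. -/
def vert (v : G.V) : L K G := RingQuot.mkRingHom (Rel K G) (FreeAlgebra.ι K (Gen.vert v))

/-- The image of an edge. -/
def edge (e : G.E) : L K G := RingQuot.mkRingHom (Rel K G) (FreeAlgebra.ι K (Gen.edge e))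

/-- The image of a ghost edge `e*`. -/
def ghost (e : G.E) : L K G := RingQuot.mkRingHom (Rel K G) (FreeAlgebra.ι K (Gen.ghost e))

/-- The product `e₁⋯eₙ` associated with a list of edges. -/
def pathProd (p : List G.E) : L K G := (p.map (edge K G)).prod

/-- The product `eₙ*⋯e₁*` associated with a list of edges. -/
def starProd (p : List G.E) : L K G := (p.reverse.map (ghost K G)).prod

/-- The list of edges forms a path. -/
def IsPath (p : List G.E) : Prop := p.Chain' fun e f => G.r e = G.s f

/-- Monomials `p q*` of degree `n = |p| - |q|` (with `r(p) = r(q) = v`). -/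
def monoSet (n : ℤ) : Set (L K G) :=
  { x | ∃ (p q : List G.E) (v : G.V), IsPath G p ∧ IsPath G q ∧
      (∀ e : G.E, p.getLast? = some e → G.r e = v) ∧
      (∀ e : G.E, q.getLast? = some e → G.r e = v) ∧
      (p.length : ℤ) - q.length = n ∧
      x = pathProd K G p * vert K G v * starProd K G q }

/-- The degree-`n` homogeneous component of the Leavitt path algebra. -/
def component (n : ℤ) : Submodule K (L K G) := Submodule.span K (monoSet K G n)

/-- The Leavitt path algebra as a subspace of its unital envelope:
the span of all monomials `p q*`. -/
def lpa : Submodule K (L K G) := Submodule.span K (⋃ n : ℤ, monoSet K G n)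

end LPAGraph


/-! ### Auxiliary development -/

attribute [local instance] Classical.propDecidable

namespace LPAGraph

variable {K : Type} [Field K] {G : LPAGraph}

section BasicRel

private lemma relEq {a b : FreeAlgebra K (Gen G)} (h : Rel K G a b) :
    RingQuot.mkRingHom (Rel K G) a = RingQuot.mkRingHom (Rel K G) b :=
  RingQuot.mkRingHom_rel h

lemma vert_mul_vert {u w : G.V} (h : u ≠ w) : vert K G u * vert K G w = 0 := by
  rw [vert, vert, ← map_mul, relEq (Rel.vv h)]; exact map_zero _

lemma vert_mul_self (u : G.V) : vert K G u * vert K G u = vert K G u := by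
  rw [vert, ← map_mul]; exact relEq (Rel.v_idem u)

lemma vert_mul_edge (e : G.E) : vert K G (G.s e) * edge K G e = edge K G e := by
  rw [vert, edge, ← map_mul]; exact relEq (Rel.se e)

lemma edge_mul_vert (e : G.E) : edge K G e * vert K G (G.r e) = edge K G e := by
  rw [vert, edge, ← map_mul]; exact relEq (Rel.er e)

lemma vert_mul_ghost (e : G.E) : vert K G (G.r e) * ghost K G e = ghost K G e := by
  rw [vert, ghost, ← map_mul]; exact relEq (Rel.rg e)

lemma ghost_mul_vert (e : G.E) : ghost K G e * vert K G (G.s e) = ghost K G e := by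
  rw [vert, ghost, ← map_mul]; exact relEq (Rel.gs e)

lemma ghost_mul_edge_ne {e f : G.E} (h : e ≠ f) : ghost K G e * edge K G f = 0 := by
  rw [ghost, edge, ← map_mul, relEq (Rel.ck1_ne h)]; exact map_zero _

lemma ghost_mul_edge (e : G.E) : ghost K G e * edge K G e = vert K G (G.r e) := by
  rw [ghost, edge, vert, ← map_mul]; exact relEq (Rel.ck1 e)

lemma vert_eq_sum (v : G.V) (hfin : {e : G.E | G.s e = v}.Finite)
    (hne : {e : G.E | G.s e = v}.Nonempty) :
    vert K G v = hfin.toFinset.sum fun e => edge K G e * ghost K G e := by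
  rw [vert]
  rw [relEq (Rel.ck2 v hfin hne)]
  rw [map_sum]
  simp only [map_mul, edge, ghost]

end BasicRel

section Paths

/-- `Trail v p` : the list of edges `p` is a path starting at the vertex `v`. -/
inductive Trail : G.V → List G.E → Prop
  | nil (v : G.V) : Trail v []
  | cons {v : G.V} {e : G.E} {t : List G.E} (h1 : G.s e = v) (h2 : Trail (G.r e) t) :
      Trail v (e :: t)

/-- The end vertex of a path `p` starting at `v`. -/
def endV (v : G.V) (p : List G.E) : G.V := p.foldl (fun _ e => G.r e) v

lemma trail_cons_iff {v : G.V} {e : G.E} {t : List G.E} :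
    Trail v (e :: t) ↔ G.s e = v ∧ Trail (G.r e) t :=
  ⟨fun h => by cases h with | cons h1 h2 => exact ⟨h1, h2⟩, fun ⟨a, b⟩ => Trail.cons a b⟩

@[simp] lemma endV_nil (v : G.V) : endV v ([] : List G.E) = v := rfl

@[simp] lemma endV_cons (v : G.V) (e : G.E) (t : List G.E) :
    endV v (e :: t) = endV (G.r e) t := rfl

@[simp] lemma pathProd_nil : pathProd K G [] = 1 := rfl

@[simp] lemma pathProd_cons (e : G.E) (t : List G.E) :
    pathProd K G (e :: t) = edge K G e * pathProd K G t := by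
  simp [pathProd]

@[simp] lemma starProd_nil : starProd K G [] = 1 := rfl

@[simp] lemma starProd_cons (e : G.E) (t : List G.E) :
    starProd K G (e :: t) = starProd K G t * ghost K G e := by
  simp [starProd]

lemma vert_mul_pathProd {v : G.V} {p : List G.E} (h : Trail v p) (hp : p ≠ []) :
    vert K G v * pathProd K G p = pathProd K G p := by
  cases p with
  | nil => exact absurd rfl hp
  | cons e t =>
      obtain ⟨h1, -⟩ := trail_cons_iff.mp h
      rw [pathProd_cons, ← mul_assoc, ← h1, vert_mul_edge]

lemma pathProd_mul_vert_end {p : List G.E} :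
    ∀ {v : G.V}, Trail v p → p ≠ [] →
      pathProd K G p * vert K G (endV v p) = pathProd K G p := by
  induction p with
  | nil => intro v _ hp; exact absurd rfl hp
  | cons e t ih =>
      intro v h _
      obtain ⟨h1, h2⟩ := trail_cons_iff.mp h
      rcases eq_or_ne t [] with rfl | ht
      · simp [edge_mul_vert]
      · rw [endV_cons, pathProd_cons, mul_assoc, ih h2 ht]

lemma starProd_mul_vert {v : G.V} {p : List G.E} (h : Trail v p) (hp : p ≠ []) :
    starProd K G p * vert K G v = starProd K G p := by
  cases p with
  | nil => exact absurd rfl hp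
  | cons e t =>
      obtain ⟨h1, -⟩ := trail_cons_iff.mp h
      rw [starProd_cons, mul_assoc, ← h1, ghost_mul_vert]

lemma starProd_mul_pathProd {p : List G.E} :
    ∀ {v : G.V}, Trail v p → p ≠ [] →
      starProd K G p * pathProd K G p = vert K G (endV v p) := by
  induction p with
  | nil => intro v _ hp; exact absurd rfl hp
  | cons e t ih =>
      intro v h _
      obtain ⟨h1, h2⟩ := trail_cons_iff.mp h
      rw [starProd_cons, pathProd_cons, endV_cons]
      rcases eq_or_ne t [] with rfl | ht
      · simp [ghost_mul_edge]
      · have : ghost K G e * (edge K G e * pathProd K G t) = pathProd K G t := by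
          rw [← mul_assoc, ghost_mul_edge, vert_mul_pathProd h2 ht]
        rw [mul_assoc, this, ih h2 ht]

lemma trail_of_isPath {p : List G.E} (h : IsPath G p) :
    ∀ {v : G.V}, (∀ e, p.head? = some e → G.s e = v) → Trail v p := by
  induction p with
  | nil => intro v _; exact Trail.nil v
  | cons e t ih =>
      intro v hv
      have h1 : G.s e = v := hv e rfl
      have hch : t.Chain' fun e f => G.r e = G.s f := (List.isChain_cons.mp h).2
      refine Trail.cons h1 (ih hch ?_)
      intro f hf
      exact ((List.isChain_cons.mp h).1 f hf).symm

lemma endV_eq_getLast {p : List G.E} (hp : p ≠ []) (v : G.V) :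
    endV v p = G.r (p.getLast hp) := by
  induction p generalizing v with
  | nil => exact absurd rfl hp
  | cons e t ih =>
      rcases eq_or_ne t [] with rfl | ht
      · rfl
      · rw [endV_cons, ih ht, List.getLast_cons ht]

end Paths

end LPAGraph
namespace LPAGraph

variable {K : Type} [Field K] {G : LPAGraph}

section Grading

/-- Laurent polynomials over `L K G`. -/
abbrev AA (K : Type) [Field K] (G : LPAGraph) : Type := AddMonoidAlgebra (L K G) ℤ

noncomputable def genDeg (K : Type) [Field K] (G : LPAGraph) : Gen G → AA K G
  | Gen.vert v => AddMonoidAlgebra.single 0 (vert K G v)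
  | Gen.edge e => AddMonoidAlgebra.single 1 (edge K G e)
  | Gen.ghost e => AddMonoidAlgebra.single (-1) (ghost K G e)

noncomputable def preDeg (K : Type) [Field K] (G : LPAGraph) :
    FreeAlgebra K (Gen G) →ₐ[K] AA K G :=
  FreeAlgebra.lift K (genDeg K G)

lemma preDeg_rel : ∀ ⦃x y : FreeAlgebra K (Gen G)⦄, Rel K G x y →
    preDeg K G x = preDeg K G y := by
  intro x y h
  induction h with
  | @vv u w h =>
      simp only [preDeg, map_mul, map_zero, FreeAlgebra.lift_ι_apply, genDeg,
        AddMonoidAlgebra.single_mul_single, vert_mul_vert h, AddMonoidAlgebra.single_zero]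
  | v_idem u =>
      simp only [preDeg, map_mul, FreeAlgebra.lift_ι_apply, genDeg,
        AddMonoidAlgebra.single_mul_single, vert_mul_self, add_zero]
  | se e =>
      simp only [preDeg, map_mul, FreeAlgebra.lift_ι_apply, genDeg,
        AddMonoidAlgebra.single_mul_single, vert_mul_edge, zero_add]
  | er e =>
      simp only [preDeg, map_mul, FreeAlgebra.lift_ι_apply, genDeg,
        AddMonoidAlgebra.single_mul_single, edge_mul_vert, add_zero]
  | rg e =>
      simp only [preDeg, map_mul, FreeAlgebra.lift_ι_apply, genDeg,
        AddMonoidAlgebra.single_mul_single, vert_mul_ghost, zero_add]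
  | gs e =>
      simp only [preDeg, map_mul, FreeAlgebra.lift_ι_apply, genDeg,
        AddMonoidAlgebra.single_mul_single, ghost_mul_vert, add_zero]
  | @ck1_ne e f h =>
      simp only [preDeg, map_mul, map_zero, FreeAlgebra.lift_ι_apply, genDeg,
        AddMonoidAlgebra.single_mul_single, ghost_mul_edge_ne h, AddMonoidAlgebra.single_zero]
  | ck1 e =>
      simp only [preDeg, map_mul, FreeAlgebra.lift_ι_apply, genDeg,
        AddMonoidAlgebra.single_mul_single, ghost_mul_edge, neg_add_cancel]
  | ck2 v hfin hne =>
      simp only [preDeg, map_sum, map_mul, FreeAlgebra.lift_ι_apply, genDeg,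
        AddMonoidAlgebra.single_mul_single, add_neg_cancel]
      rw [vert_eq_sum v hfin hne]
      rw [← AddMonoidAlgebra.coeff_inj, AddMonoidAlgebra.coeff_sum]
      exact Finsupp.single_finset_sum _ _ _

/-- The grading homomorphism `L → L[t,t⁻¹]`. -/
noncomputable def deg (K : Type) [Field K] (G : LPAGraph) : L K G →ₐ[K] AA K G :=
  RingQuot.liftAlgHom K ⟨preDeg K G, preDeg_rel⟩

lemma deg_mk (x : FreeAlgebra K (Gen G)) :
    deg K G (RingQuot.mkRingHom (Rel K G) x) = preDeg K G x := by
  have h1 : RingQuot.mkRingHom (Rel K G) x = RingQuot.mkAlgHom K (Rel K G) x := by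
    rw [← RingQuot.mkAlgHom_coe K (Rel K G)]; rfl
  rw [h1, deg, RingQuot.liftAlgHom_mkAlgHom_apply]

@[simp] lemma deg_vert (v : G.V) :
    deg K G (vert K G v) = AddMonoidAlgebra.single 0 (vert K G v) := by
  rw [vert, deg_mk, preDeg, FreeAlgebra.lift_ι_apply]; rfl

@[simp] lemma deg_edge (e : G.E) :
    deg K G (edge K G e) = AddMonoidAlgebra.single 1 (edge K G e) := by
  rw [edge, deg_mk, preDeg, FreeAlgebra.lift_ι_apply]; rfl

@[simp] lemma deg_ghost (e : G.E) :
    deg K G (ghost K G e) = AddMonoidAlgebra.single (-1) (ghost K G e) := by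
  rw [ghost, deg_mk, preDeg, FreeAlgebra.lift_ι_apply]; rfl

lemma deg_pathProd (p : List G.E) :
    deg K G (pathProd K G p) = AddMonoidAlgebra.single (p.length : ℤ) (pathProd K G p) := by
  induction p with
  | nil =>
      simp only [pathProd_nil, map_one, List.length_nil, Nat.cast_zero]
      rfl
  | cons e t ih =>
      rw [pathProd_cons, map_mul, deg_edge, ih, AddMonoidAlgebra.single_mul_single]
      congr 1
      push_cast [List.length_cons]
      ring

lemma deg_starProd (p : List G.E) :
    deg K G (starProd K G p) = AddMonoidAlgebra.single (-(p.length : ℤ)) (starProd K G p) := by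
  induction p with
  | nil =>
      simp only [starProd_nil, map_one, List.length_nil, Nat.cast_zero, neg_zero]
      rfl
  | cons e t ih =>
      rw [starProd_cons, map_mul, deg_ghost, ih, AddMonoidAlgebra.single_mul_single]
      congr 1
      push_cast [List.length_cons]
      ring

lemma deg_of_mem_component {n : ℤ} {x : L K G} (hx : x ∈ component K G n) :
    deg K G x = AddMonoidAlgebra.single n x := by
  let M : Submodule K (L K G) :=
    { carrier := {y | deg K G y = AddMonoidAlgebra.single n y}
      add_mem' := by
        intro a b ha hb
        simp only [Set.mem_setOf_eq] at *
        rw [map_add, ha, hb, AddMonoidAlgebra.single_add]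
      zero_mem' := by
        simp only [Set.mem_setOf_eq, map_zero, AddMonoidAlgebra.single_zero]
      smul_mem' := by
        intro c a ha
        simp only [Set.mem_setOf_eq] at *
        rw [map_smul, ha, AddMonoidAlgebra.smul_single] }
  have hsub : monoSet K G n ⊆ M := by
    rintro y ⟨p, q, v, _, _, _, _, hlen, rfl⟩
    show deg K G _ = _
    rw [map_mul, map_mul, deg_pathProd, deg_starProd, deg_vert,
      AddMonoidAlgebra.single_mul_single, AddMonoidAlgebra.single_mul_single]
    rw [add_zero, ← hlen, sub_eq_add_neg]
  exact Submodule.span_le.mpr hsub hx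

end Grading

end LPAGraph
namespace LPAGraph

section Abstract

variable {R : Type} [Ring R]

lemma pow_fix_of_graded (X U : R) (m : ℤ) (hm : 1 ≤ m) (S : AddMonoidAlgebra R ℤ)
    (heq : AddMonoidAlgebra.single (0 : ℤ) U + AddMonoidAlgebra.single m X * S
      = AddMonoidAlgebra.single m X + S) :
    ∃ k : ℕ, 1 ≤ k ∧ X ^ k * U = X ^ k := by
  have hco : ∀ j : ℤ, (if (0 : ℤ) = j then U else 0) + X * S.coeff (-m + j)
      = (if m = j then X else 0) + S.coeff j := by
    intro j
    have a1 : (AddMonoidAlgebra.single (0 : ℤ) U).coeff j = if (0 : ℤ) = j then U else 0 := by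
      rw [AddMonoidAlgebra.coeff_single, Finsupp.single_apply]
    have a2 : (AddMonoidAlgebra.single m X * S).coeff j = X * S.coeff (-m + j) :=
      AddMonoidAlgebra.coeff_single_mul_apply S X m j
    have a4 : (AddMonoidAlgebra.single m X).coeff j = if m = j then X else 0 := by
      rw [AddMonoidAlgebra.coeff_single, Finsupp.single_apply]
    have a3 : (AddMonoidAlgebra.single (0 : ℤ) U + AddMonoidAlgebra.single m X * S).coeff j
        = (AddMonoidAlgebra.single (0 : ℤ) U).coeff j + (AddMonoidAlgebra.single m X * S).coeff j := by
      rw [AddMonoidAlgebra.coeff_add, Finsupp.add_apply]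
    have a5 : (AddMonoidAlgebra.single m X + S).coeff j = (AddMonoidAlgebra.single m X).coeff j + S.coeff j := by
      rw [AddMonoidAlgebra.coeff_add, Finsupp.add_apply]
    have h0 : (AddMonoidAlgebra.single (0 : ℤ) U + AddMonoidAlgebra.single m X * S).coeff j
        = (AddMonoidAlgebra.single m X + S).coeff j := by rw [heq]
    rw [← a1, ← a2, ← a3, h0, a5, a4]
  have hneg : ∀ j : ℤ, j < 0 → S.coeff j = 0 := by
    by_contra hcon
    push_neg at hcon
    obtain ⟨j, hj, hne⟩ := hcon
    set P : Finset ℤ := S.coeff.support.filter (fun j => j < 0) with hP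
    have hPne : P.Nonempty := ⟨j, by simp [hP, Finsupp.mem_support_iff, hne, hj]⟩
    set j₀ := P.min' hPne with hj₀def
    have hj₀ : S.coeff j₀ ≠ 0 ∧ j₀ < 0 := by
      have := P.min'_mem hPne
      simpa [hP, Finsupp.mem_support_iff] using this
    have h1 : S.coeff j₀ = X * S.coeff (-m + j₀) := by
      have := hco j₀
      rw [if_neg (by omega), if_neg (by omega), zero_add, zero_add] at this
      exact this.symm
    have h2 : S.coeff (-m + j₀) = 0 := by
      by_contra h
      have hmem : -m + j₀ ∈ P := by
        simp only [hP, Finset.mem_filter, Finsupp.mem_support_iff]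
        exact ⟨h, by omega⟩
      have := P.min'_le _ hmem
      omega
    rw [h2, mul_zero] at h1
    exact hj₀.1 h1
  have hU : U = S.coeff 0 := by
    have := hco 0
    rw [if_pos rfl, if_neg (by omega), add_zero, hneg (-m) (by omega), mul_zero,
      add_zero, zero_add] at this
    exact this
  have hSm : ∀ k : ℕ, S.coeff (((k : ℤ) + 1) * m) = X ^ (k + 1) * U - X ^ (k + 1) := by
    intro k
    induction k with
    | zero =>
        have h := hco m
        rw [if_neg (by omega), if_pos rfl, zero_add, neg_add_cancel, ← hU] at h
        rw [show ((0 : ℕ) : ℤ) + 1 = 1 by norm_num, one_mul, pow_one, h]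
        abel
    | succ k ih =>
        have h := hco (((k : ℤ) + 2) * m)
        have hpos1 : (0 : ℤ) < ((k : ℤ) + 1) * m := mul_pos (by omega) (by omega)
        have hpos2 : (0 : ℤ) < ((k : ℤ) + 2) * m := mul_pos (by omega) (by omega)
        have hne0 : (0 : ℤ) ≠ ((k : ℤ) + 2) * m := by omega
        have hnem : m ≠ ((k : ℤ) + 2) * m := by
          have : ((k : ℤ) + 2) * m = ((k : ℤ) + 1) * m + m := by ring
          omega
        have hidx : -m + ((k : ℤ) + 2) * m = ((k : ℤ) + 1) * m := by ring
        rw [if_neg hne0, if_neg hnem, zero_add, zero_add, hidx, ih] at h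
        have hcast : ((k + 1 : ℕ) : ℤ) + 1 = (k : ℤ) + 2 := by push_cast; ring
        rw [hcast, ← h, mul_sub, ← mul_assoc, ← pow_succ']
  set N := S.coeff.support.sup (fun j => j.toNat) with hN
  refine ⟨N + 1, by omega, ?_⟩
  have hnotmem : ((N : ℤ) + 1) * m ∉ S.coeff.support := by
    intro hmem
    have hle : (((N : ℤ) + 1) * m).toNat ≤ N := Finset.le_sup (f := fun j => j.toNat) hmem
    have h3 : ((N : ℤ) + 1) * 1 ≤ ((N : ℤ) + 1) * m :=
      mul_le_mul_of_nonneg_left hm (by omega)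
    omega
  have hz : S.coeff (((N : ℤ) + 1) * m) = 0 := Finsupp.notMem_support_iff.mp hnotmem
  have := hSm N
  rw [hz] at this
  have := sub_eq_zero.mp this.symm
  exact this

lemma vert_eq_mul_star (X Xs W u r : R) (hXsX : Xs * X = W) (hWX : W * X = X)
    (hXW : X * W = X) (hXsW : Xs * W = Xs) (hu : u = X * r)
    (k : ℕ) (hk1 : 1 ≤ k) (hfix : X ^ k * u = X ^ k) : W = X * Xs := by
  have hWXpow : ∀ j : ℕ, W * X ^ (j + 1) = X ^ (j + 1) := by
    intro j
    induction j with
    | zero => simpa using hWX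
    | succ j ih => rw [pow_succ, ← mul_assoc, ih]
  have hpow : ∀ j : ℕ, Xs ^ (j + 1) * X ^ (j + 1) = W := by
    intro j
    induction j with
    | zero => simpa using hXsX
    | succ j ih =>
        have h1 : Xs ^ (j + 1 + 1) * X ^ (j + 1 + 1)
            = Xs ^ (j + 1) * (Xs * X * X ^ (j + 1)) := by
          rw [pow_succ (a := Xs), pow_succ' (a := X)]
          noncomm_ring
        rw [h1, hXsX, hWXpow, ih]
  obtain ⟨k', rfl⟩ : ∃ k', k = k' + 1 := ⟨k - 1, by omega⟩
  have hWu : W * u = W := by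
    calc W * u = Xs ^ (k' + 1) * X ^ (k' + 1) * u := by rw [hpow]
    _ = Xs ^ (k' + 1) * (X ^ (k' + 1) * u) := by rw [mul_assoc]
    _ = Xs ^ (k' + 1) * X ^ (k' + 1) := by rw [hfix]
    _ = W := hpow k'
  have hXXsu : X * Xs * u = u := by
    calc X * Xs * u = X * Xs * (X * r) := by rw [hu]
    _ = X * (Xs * X) * r := by noncomm_ring
    _ = X * W * r := by rw [hXsX]
    _ = X * r := by rw [hXW]
    _ = u := hu.symm
  have huW : u = W := by
    have h1 : W * u = u := by
      calc W * u = W * (X * Xs * u) := by rw [hXXsu]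
      _ = (W * X) * Xs * u := by noncomm_ring
      _ = X * Xs * u := by rw [hWX]
      _ = u := hXXsu
    rw [← h1, hWu]
  calc W = u := huW.symm
  _ = X * Xs * u := hXXsu.symm
  _ = X * Xs * W := by rw [huW]
  _ = X * (Xs * W) := by rw [mul_assoc]
  _ = X * Xs := by rw [hXsW]

end Abstract

end LPAGraph
namespace LPAGraph

variable {K : Type} [Field K] {G : LPAGraph}

section Rep

/-- A vertex is regular if it emits a nonempty finite set of edges. -/
def Reg (G : LPAGraph) (v : G.V) : Prop :=
  {e : G.E | G.s e = v}.Finite ∧ {e : G.E | G.s e = v}.Nonempty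

/-- Finite paths ending at a non-regular vertex. -/
def TB (G : LPAGraph) : Type :=
  {x : G.V × List G.E // Trail x.1 x.2 ∧ ¬ Reg G (endV x.1 x.2)}

/-- Infinite paths. -/
def IB (G : LPAGraph) : Type :=
  {f : ℕ → G.E // ∀ n, G.r (f n) = G.s (f (n + 1))}

/-- The basis for the representation. -/
def BB (G : LPAGraph) : Type := TB G ⊕ IB G

attribute [reducible] TB IB BB

/-- Source vertex of a basis element. -/
def srcB : BB G → G.V
  | Sum.inl x => x.val.1
  | Sum.inr f => G.s (f.val 0)

attribute [reducible] srcB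

/-- The module of the representation. -/
abbrev MB (K : Type) [Field K] (G : LPAGraph) : Type := BB G →₀ K

/-- Prolong a basis element by an edge. -/
noncomputable def consB (e : G.E) : ∀ b : BB G, G.r e = srcB b → BB G
  | Sum.inl ⟨(v, p), h⟩, hre =>
      Sum.inl ⟨(G.s e, e :: p),
        ⟨Trail.cons rfl (by rw [hre]; exact h.1), by
          show ¬ Reg G (endV (G.r e) p)
          rw [hre]; exact h.2⟩⟩
  | Sum.inr ⟨f, hf⟩, hre =>
      Sum.inr ⟨fun n => match n with | 0 => e | (k + 1) => f k,
        fun n => match n with | 0 => hre | (k + 1) => hf k⟩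

@[simp] lemma srcB_inl (v : G.V) (p : List G.E) (h) :
    srcB (Sum.inl ⟨(v, p), h⟩ : BB G) = v := rfl

@[simp] lemma srcB_inr (f : ℕ → G.E) (hf) :
    srcB (Sum.inr ⟨f, hf⟩ : BB G) = G.s (f 0) := rfl

@[simp] lemma srcB_consB (e : G.E) (b : BB G) (h : G.r e = srcB b) :
    srcB (consB e b h) = G.s e := by
  rcases b with ⟨⟨v, p⟩, hb⟩ | ⟨f, hf⟩ <;> rfl

noncomputable def endo (g : BB G → MB K G) : Module.End K (MB K G) :=
  Finsupp.linearCombination K g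

lemma endo_single1 (g : BB G → MB K G) (b : BB G) :
    endo g (Finsupp.single b (1 : K)) = g b := by
  rw [endo, Finsupp.linearCombination_single, one_smul]

noncomputable def vact (u : G.V) (b : BB G) : MB K G :=
  if srcB b = u then Finsupp.single b 1 else 0

noncomputable def eact (e : G.E) (b : BB G) : MB K G :=
  if h : G.r e = srcB b then Finsupp.single (consB e b h) 1 else 0

noncomputable def gact (e : G.E) : BB G → MB K G
  | Sum.inl ⟨(_, []), _⟩ => 0
  | Sum.inl ⟨(v, a :: t), h⟩ =>
      if a = e then
        Finsupp.single (Sum.inl ⟨(G.r a, t), ⟨(trail_cons_iff.mp h.1).2, h.2⟩⟩) 1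
      else 0
  | Sum.inr ⟨f, hf⟩ =>
      if f 0 = e then
        Finsupp.single (Sum.inr ⟨fun n => f (n + 1), fun n => hf (n + 1)⟩) 1
      else 0

lemma vact_apply (u : G.V) (b : BB G) :
    vact (K := K) u b = if srcB b = u then Finsupp.single b 1 else 0 := rfl

lemma eact_apply (e : G.E) (b : BB G) :
    eact (K := K) e b = if h : G.r e = srcB b then Finsupp.single (consB e b h) 1 else 0 := rfl

lemma gact_nil (e : G.E) (v : G.V) (h) :
    gact (K := K) e (Sum.inl ⟨(v, []), h⟩) = 0 := rfl

lemma gact_cons (e : G.E) (v : G.V) (a : G.E) (t : List G.E) (h) :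
    gact (K := K) e (Sum.inl ⟨(v, a :: t), h⟩) =
      if a = e then
        Finsupp.single (Sum.inl ⟨(G.r a, t), ⟨(trail_cons_iff.mp h.1).2, h.2⟩⟩) 1
      else 0 := rfl

lemma gact_inf (e : G.E) (f : ℕ → G.E) (hf) :
    gact (K := K) e (Sum.inr ⟨f, hf⟩) =
      if f 0 = e then
        Finsupp.single (Sum.inr ⟨fun n => f (n + 1), fun n => hf (n + 1)⟩) 1
      else 0 := rfl

lemma eact_pos (e : G.E) (b : BB G) (h : G.r e = srcB b) :
    eact (K := K) e b = Finsupp.single (consB e b h) 1 := by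
  rw [eact_apply, dif_pos h]

lemma gact_consB (e : G.E) (b : BB G) (h : G.r e = srcB b) :
    gact (K := K) e (consB e b h) = Finsupp.single b 1 := by
  rcases b with ⟨⟨v, p⟩, hb⟩ | ⟨f, hf⟩
  · rw [show consB e (Sum.inl ⟨(v, p), hb⟩) h = Sum.inl ⟨(G.s e, e :: p), _⟩ from rfl,
      gact_cons, if_pos rfl]
    congr 1
    apply congrArg
    apply Subtype.ext
    exact Prod.ext h rfl
  · rw [show consB e (Sum.inr ⟨f, hf⟩) h = Sum.inr ⟨_, _⟩ from rfl, gact_inf, if_pos rfl]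

lemma gact_consB_ne {e f : G.E} (hne : f ≠ e) (b : BB G) (h : G.r f = srcB b) :
    gact (K := K) e (consB f b h) = 0 := by
  rcases b with ⟨⟨v, p⟩, hb⟩ | ⟨g, hg⟩
  · rw [show consB f (Sum.inl ⟨(v, p), hb⟩) h = Sum.inl ⟨(G.s f, f :: p), _⟩ from rfl,
      gact_cons, if_neg hne]
  · rw [show consB f (Sum.inr ⟨g, hg⟩) h = Sum.inr ⟨_, _⟩ from rfl, gact_inf]
    exact if_neg hne

lemma gact_eq_zero_of_src_ne {e : G.E} {b : BB G} (h : srcB b ≠ G.s e) :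
    gact (K := K) e b = 0 := by
  rcases b with ⟨⟨v, p⟩, hb⟩ | ⟨f, hf⟩
  · rcases p with _ | ⟨a, t⟩
    · rfl
    · rw [gact_cons, if_neg]
      intro hae
      apply h
      have hsa : G.s a = v := (trail_cons_iff.mp hb.1).1
      show v = G.s e
      rw [← hsa, hae]
  · rw [gact_inf, if_neg]
    intro h0
    exact h (congrArg G.s h0)

lemma srcB_gact {e : G.E} {b b' : BB G} (h : gact (K := K) e b = Finsupp.single b' 1) :
    True := trivial

lemma end_ext {F H : Module.End K (MB K G)}
    (h : ∀ b : BB G, F (Finsupp.single b 1) = H (Finsupp.single b 1)) : F = H := by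
  apply Finsupp.lhom_ext
  intro b k
  have hk : Finsupp.single b k = k • Finsupp.single b (1 : K) := by
    rw [Finsupp.smul_single, smul_eq_mul, mul_one]
  rw [hk, map_smul, map_smul, h]

lemma mulE_single (f g : BB G → MB K G) (b : BB G) :
    (endo f * endo g) (Finsupp.single b (1 : K)) = endo f (g b) := by
  rw [Module.End.mul_apply, endo_single1]

/-- E1 -/
lemma endo_vv {u w : G.V} (h : u ≠ w) :
    (endo (K := K) (vact u)) * endo (vact w) = 0 := by
  apply end_ext
  intro b
  rw [mulE_single, vact_apply, LinearMap.zero_apply]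
  by_cases h1 : srcB b = w
  · rw [if_pos h1, endo_single1, vact_apply, if_neg (by rw [h1]; exact fun hh => h hh.symm)]
  · rw [if_neg h1, map_zero]

/-- E2 -/
lemma endo_v_idem (u : G.V) :
    (endo (K := K) (vact u)) * endo (vact u) = endo (vact u) := by
  apply end_ext
  intro b
  rw [mulE_single, endo_single1, vact_apply]
  by_cases h1 : srcB b = u
  · rw [if_pos h1, endo_single1, vact_apply, if_pos h1]
  · rw [if_neg h1, map_zero]

/-- E3 -/
lemma endo_se (e : G.E) :
    (endo (K := K) (vact (G.s e))) * endo (eact e) = endo (eact e) := by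
  apply end_ext
  intro b
  rw [mulE_single, endo_single1, eact_apply]
  by_cases h1 : G.r e = srcB b
  · rw [dif_pos h1, endo_single1, vact_apply, if_pos (srcB_consB e b h1)]
  · rw [dif_neg h1, map_zero]

/-- E4 -/
lemma endo_er (e : G.E) :
    (endo (K := K) (eact e)) * endo (vact (G.r e)) = endo (eact e) := by
  apply end_ext
  intro b
  rw [mulE_single, endo_single1, vact_apply]
  by_cases h1 : srcB b = G.r e
  · rw [if_pos h1, endo_single1]
  · rw [if_neg h1, map_zero, eact_apply, dif_neg (fun hh => h1 hh.symm)]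

/-- E5 -/
lemma endo_rg (e : G.E) :
    (endo (K := K) (vact (G.r e))) * endo (gact e) = endo (gact e) := by
  apply end_ext
  intro b
  rw [mulE_single, endo_single1]
  rcases b with ⟨⟨v, p⟩, hb⟩ | ⟨f, hf⟩
  · rcases p with _ | ⟨a, t⟩
    · rw [gact_nil, map_zero]
    · rw [gact_cons]
      by_cases h1 : a = e
      · rw [if_pos h1, endo_single1, vact_apply]
        rw [if_pos (by show G.r a = G.r e; rw [h1])]
      · rw [if_neg h1, map_zero]
  · rw [gact_inf]
    by_cases h1 : f 0 = e
    · rw [if_pos h1, endo_single1, vact_apply,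
        if_pos (by show G.s (f 1) = G.r e; rw [← h1]; exact (hf 0).symm)]
    · rw [if_neg h1, map_zero]

/-- E6 -/
lemma endo_gs (e : G.E) :
    (endo (K := K) (gact e)) * endo (vact (G.s e)) = endo (gact e) := by
  apply end_ext
  intro b
  rw [mulE_single, endo_single1, vact_apply]
  by_cases h1 : srcB b = G.s e
  · rw [if_pos h1, endo_single1]
  · rw [if_neg h1, map_zero, gact_eq_zero_of_src_ne h1]

/-- E7 -/
lemma endo_ck1_ne {e f : G.E} (h : e ≠ f) :
    (endo (K := K) (gact e)) * endo (eact f) = 0 := by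
  apply end_ext
  intro b
  rw [mulE_single, eact_apply, LinearMap.zero_apply]
  by_cases h1 : G.r f = srcB b
  · rw [dif_pos h1, endo_single1, gact_consB_ne (fun hh => h hh.symm)]
  · rw [dif_neg h1, map_zero]

/-- E8 -/
lemma endo_ck1 (e : G.E) :
    (endo (K := K) (gact e)) * endo (eact e) = endo (vact (G.r e)) := by
  apply end_ext
  intro b
  rw [mulE_single, endo_single1, eact_apply, vact_apply]
  by_cases h1 : G.r e = srcB b
  · rw [dif_pos h1, endo_single1, gact_consB, if_pos h1.symm]
  · rw [dif_neg h1, map_zero, if_neg (fun hh => h1 hh.symm)]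

/-- E9 -/
lemma endo_ck2 (v : G.V) (hfin : {e : G.E | G.s e = v}.Finite)
    (hne : {e : G.E | G.s e = v}.Nonempty) :
    (endo (K := K) (vact v)) =
      hfin.toFinset.sum fun e => endo (K := K) (eact e) * endo (gact e) := by
  apply end_ext
  intro b
  rcases b with ⟨⟨v', p⟩, hb⟩ | ⟨f, hf⟩
  · rw [endo_single1, vact_apply, LinearMap.sum_apply]
    simp only [mulE_single, srcB_inl]
    rcases p with _ | ⟨a, t⟩
    · rw [if_neg, Finset.sum_eq_zero]
      · intro e _
        rw [gact_nil, map_zero]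
      · intro (hv : v' = v)
        refine hb.2 ?_
        show G.Reg v'
        rw [hv]
        exact ⟨hfin, hne⟩
    · have hsa : G.s a = v' := (trail_cons_iff.mp hb.1).1
      by_cases hv : v' = v
      · rw [if_pos hv]
        have hmem : a ∈ hfin.toFinset := by
          rw [Set.Finite.mem_toFinset]; exact hsa.trans hv
        rw [Finset.sum_eq_single_of_mem a hmem]
        · rw [gact_cons, if_pos rfl, endo_single1]
          have h9 : G.r a = srcB (Sum.inl ⟨(G.r a, t),
              ⟨(trail_cons_iff.mp hb.1).2, hb.2⟩⟩ : BB G) := rfl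
          rw [eact_pos _ _ h9]
          congr 1
          rw [show consB a (Sum.inl ⟨(G.r a, t), _⟩) rfl
            = Sum.inl ⟨(G.s a, a :: t), _⟩ from rfl]
          apply congrArg
          apply Subtype.ext
          exact Prod.ext hsa.symm rfl
        · intro e _ hea
          rw [gact_cons, if_neg (fun hh => hea hh.symm), map_zero]
      · rw [if_neg hv, Finset.sum_eq_zero]
        intro e hemem
        have hse : G.s e = v := by
          rw [Set.Finite.mem_toFinset] at hemem; exact hemem
        have hea : a ≠ e := fun hh => hv (by rw [← hsa, hh, hse])
        rw [gact_cons, if_neg hea, map_zero]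
  · rw [endo_single1, vact_apply, LinearMap.sum_apply]
    simp only [mulE_single, srcB_inr]
    by_cases hv : G.s (f 0) = v
    · rw [if_pos hv]
      have hmem : f 0 ∈ hfin.toFinset := by rw [Set.Finite.mem_toFinset]; exact hv
      rw [Finset.sum_eq_single_of_mem (f 0) hmem]
      · rw [gact_inf, if_pos rfl, endo_single1]
        have h9 : G.r (f 0) = srcB (Sum.inr ⟨fun n => f (n + 1),
            fun n => hf (n + 1)⟩ : BB G) := hf 0
        rw [eact_pos _ _ h9]
        congr 1
        rw [show consB (f 0) (Sum.inr ⟨fun n => f (n + 1), _⟩) (hf 0)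
          = Sum.inr ⟨_, _⟩ from rfl]
        apply congrArg
        apply Subtype.ext
        funext n
        cases n <;> rfl
      · intro e _ hef
        rw [gact_inf, if_neg (fun hh => hef hh.symm), map_zero]
    · rw [if_neg hv, Finset.sum_eq_zero]
      intro e hemem
      have hse : G.s e = v := by rw [Set.Finite.mem_toFinset] at hemem; exact hemem
      have hfe : f 0 ≠ e := fun hh => hv (by rw [hh, hse])
      rw [gact_inf, if_neg hfe, map_zero]

noncomputable def repGen (K : Type) [Field K] (G : LPAGraph) : Gen G → Module.End K (MB K G)
  | Gen.vert v => endo (vact v)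
  | Gen.edge e => endo (eact e)
  | Gen.ghost e => endo (gact e)

lemma rep_rel : ∀ ⦃x y : FreeAlgebra K (Gen G)⦄, Rel K G x y →
    FreeAlgebra.lift K (repGen K G) x = FreeAlgebra.lift K (repGen K G) y := by
  intro x y h
  induction h with
  | @vv u w h =>
      simp only [map_mul, map_zero, FreeAlgebra.lift_ι_apply, repGen]
      exact endo_vv h
  | v_idem u =>
      simp only [map_mul, FreeAlgebra.lift_ι_apply, repGen]; exact endo_v_idem u
  | se e =>
      simp only [map_mul, FreeAlgebra.lift_ι_apply, repGen]; exact endo_se e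
  | er e =>
      simp only [map_mul, FreeAlgebra.lift_ι_apply, repGen]; exact endo_er e
  | rg e =>
      simp only [map_mul, FreeAlgebra.lift_ι_apply, repGen]; exact endo_rg e
  | gs e =>
      simp only [map_mul, FreeAlgebra.lift_ι_apply, repGen]; exact endo_gs e
  | @ck1_ne e f h =>
      simp only [map_mul, map_zero, FreeAlgebra.lift_ι_apply, repGen]; exact endo_ck1_ne h
  | ck1 e =>
      simp only [map_mul, FreeAlgebra.lift_ι_apply, repGen]; exact endo_ck1 e
  | ck2 v hfin hne =>
      simp only [map_sum, map_mul, FreeAlgebra.lift_ι_apply, repGen]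
      exact endo_ck2 v hfin hne

noncomputable def rep (K : Type) [Field K] (G : LPAGraph) :
    L K G →ₐ[K] Module.End K (MB K G) :=
  RingQuot.liftAlgHom K ⟨FreeAlgebra.lift K (repGen K G), rep_rel⟩

lemma rep_mk (x : FreeAlgebra K (Gen G)) :
    rep K G (RingQuot.mkRingHom (Rel K G) x) = FreeAlgebra.lift K (repGen K G) x := by
  have h1 : RingQuot.mkRingHom (Rel K G) x = RingQuot.mkAlgHom K (Rel K G) x := by
    rw [← RingQuot.mkAlgHom_coe K (Rel K G)]; rfl
  rw [h1, rep, RingQuot.liftAlgHom_mkAlgHom_apply]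

lemma rep_vert (v : G.V) : rep K G (vert K G v) = endo (vact v) := by
  rw [vert, rep_mk, FreeAlgebra.lift_ι_apply]; rfl

/-- Existence of a basis element starting at any given vertex. -/
noncomputable def nextV (G : LPAGraph) (v : G.V) : G.V :=
  if h : Reg G v then G.r h.2.choose else v

lemma exists_trail_seq (G : LPAGraph) :
    ∀ (n : ℕ) (u : G.V), (∀ j, j < n → Reg G ((nextV G)^[j] u)) →
      ∃ p : List G.E, Trail u p ∧ endV u p = (nextV G)^[n] u := by
  intro n
  induction n with
  | zero => intro u _; exact ⟨[], Trail.nil u, rfl⟩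
  | succ n ih =>
      intro u hr
      have h0 : Reg G u := by simpa using hr 0 (by omega)
      have hse : G.s h0.2.choose = u := h0.2.choose_spec
      have hnext : nextV G u = G.r h0.2.choose := dif_pos h0
      obtain ⟨p, hp, hend⟩ := ih (G.r h0.2.choose) (by
        intro j hj
        have := hr (j + 1) (by omega)
        rwa [Function.iterate_succ_apply, hnext] at this)
      refine ⟨h0.2.choose :: p, Trail.cons hse hp, ?_⟩
      rw [endV_cons, hend, ← hnext, ← Function.iterate_succ_apply]

lemma exists_srcB (G : LPAGraph) (u : G.V) : ∃ b : BB G, srcB b = u := by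
  by_cases hA : ∀ n : ℕ, Reg G ((nextV G)^[n] u)
  · refine ⟨Sum.inr ⟨fun n => (hA n).2.choose, fun n => ?_⟩, (hA 0).2.choose_spec⟩
    have h1 : G.s (hA (n + 1)).2.choose = (nextV G)^[n + 1] u := (hA (n + 1)).2.choose_spec
    have h2 : (nextV G)^[n + 1] u = nextV G ((nextV G)^[n] u) :=
      Function.iterate_succ_apply' _ _ _
    have h3 : nextV G ((nextV G)^[n] u) = G.r (hA n).2.choose := dif_pos (hA n)
    rw [h1, h2, h3]
  · push_neg at hA
    have hn : ∃ n, ¬ Reg G ((nextV G)^[n] u) := hA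
    set n₀ := Nat.find hn with hn₀
    have hreg : ∀ j, j < n₀ → Reg G ((nextV G)^[j] u) := by
      intro j hj
      by_contra hcon
      exact (Nat.find_min hn hj) hcon
    obtain ⟨p, hp, hend⟩ := exists_trail_seq G n₀ u hreg
    refine ⟨Sum.inl ⟨(u, p), ⟨hp, ?_⟩⟩, rfl⟩
    rw [hend]
    exact Nat.find_spec hn

lemma vert_ne_zero (K : Type) [Field K] (G : LPAGraph) (u : G.V) : vert K G u ≠ 0 := by
  obtain ⟨b, hb⟩ := exists_srcB G u
  intro h0
  have h1 : rep K G (vert K G u) = 0 := by rw [h0, map_zero]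
  have h2 := congrArg (fun F : Module.End K (MB K G) => F (Finsupp.single b (1 : K))) h1
  simp only [LinearMap.zero_apply] at h2
  rw [rep_vert, endo_single1, vact_apply, if_pos hb] at h2
  exact one_ne_zero (Finsupp.single_eq_zero.mp h2)

end Rep

end LPAGraph
namespace LPAGraph

/-- Key lemma: under the graded exchange hypothesis, a closed path admits no exit
at its initial vertex. -/
lemma no_exit_head (K : Type) [Field K] (G : LPAGraph)
    (hExch : ∀ n : ℤ, ∀ x ∈ component K G n, ∃ u ∈ component K G 0,
      u * u = u ∧ (∃ r ∈ lpa K G, u = x * r) ∧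
      (∃ s ∈ lpa K G, u = x + s - x * s))
    (d : List G.E) (hd : d ≠ []) (hpath : IsPath G d) (e₀ : G.E)
    (hhead : d.head? = some e₀)
    (hclosed : ∀ a : G.E, d.getLast? = some a → G.r a = G.s e₀)
    (f : G.E) (hsf : G.s f = G.s e₀) : f = e₀ := by
  by_contra hfe
  set w := G.s e₀ with hw
  have hhead' : d.head hd = e₀ := by
    have := List.head?_eq_head (l := d) hd
    rw [hhead] at this
    exact (Option.some.inj this).symm
  have htrail : Trail w d := by
    apply trail_of_isPath hpath
    intro a ha
    have hae : a = e₀ := by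
      rw [ha] at hhead
      exact Option.some.inj hhead
    rw [hae]
  have hend : endV w d = w := by
    rw [endV_eq_getLast hd]
    exact hclosed _ (List.getLast?_eq_getLast hd)
  set X := pathProd K G d with hX
  set Xs := starProd K G d with hXs
  set W := vert K G w with hWdef
  have hXsX : Xs * X = W := by
    have := starProd_mul_pathProd (K := K) htrail hd
    rwa [hend] at this
  have hWX : W * X = X := vert_mul_pathProd htrail hd
  have hXW : X * W = X := by
    have := pathProd_mul_vert_end (K := K) htrail hd
    rwa [hend] at this
  have hXsW : Xs * W = Xs := starProd_mul_vert htrail hd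
  have hxmem : X ∈ component K G (d.length : ℤ) := by
    apply Submodule.subset_span
    refine ⟨d, [], w, hpath, List.isChain_nil, ?_, ?_, by simp, ?_⟩
    · intro a ha
      rw [show w = G.s e₀ from rfl]
      exact hclosed a ha
    · intro a ha
      simp at ha
    · rw [starProd_nil, mul_one, hXW]
  obtain ⟨u, hu0, -, ⟨r, -, hur⟩, ⟨sx, -, hus⟩⟩ := hExch (d.length : ℤ) X hxmem
  have hdegu : deg K G u = AddMonoidAlgebra.single 0 u := deg_of_mem_component hu0
  have hdegX : deg K G X = AddMonoidAlgebra.single (d.length : ℤ) X := deg_pathProd d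
  have h1 : AddMonoidAlgebra.single (0 : ℤ) u
      = AddMonoidAlgebra.single (d.length : ℤ) X + deg K G sx
        - AddMonoidAlgebra.single (d.length : ℤ) X * deg K G sx := by
    rw [← hdegu, hus, map_sub, map_add, map_mul, hdegX]
  have heq : AddMonoidAlgebra.single (0 : ℤ) u
      + AddMonoidAlgebra.single (d.length : ℤ) X * deg K G sx
      = AddMonoidAlgebra.single (d.length : ℤ) X + deg K G sx := by
    rw [h1]; abel
  have hm1 : (1 : ℤ) ≤ (d.length : ℤ) := by
    have : 0 < d.length := List.length_pos_iff.mpr hd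
    omega
  obtain ⟨k, hk1, hfix⟩ := pow_fix_of_graded X u (d.length : ℤ) hm1 (deg K G sx) heq
  have hW : W = X * Xs := vert_eq_mul_star X Xs W u r hXsX hWX hXW hXsW hur k hk1 hfix
  have hXfact : X = edge K G e₀ * pathProd K G d.tail := by
    conv_lhs => rw [hX, ← List.cons_head_tail hd, hhead']
    rw [pathProd_cons]
  have hzero : vert K G (G.r f) = 0 := by
    have ha : ghost K G f * W * edge K G f = vert K G (G.r f) := by
      rw [hWdef, hw, ← show G.s f = G.s e₀ from hsf, ghost_mul_vert, ghost_mul_edge]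
    have hb : ghost K G f * W * edge K G f = 0 := by
      rw [hW, hXfact, ← mul_assoc, ← mul_assoc, ghost_mul_edge_ne hfe,
        zero_mul, zero_mul, zero_mul]
    rw [← ha, hb]
  exact vert_ne_zero K G (G.r f) hzero

end LPAGraph

open LPAGraph in
/-- If the Leavitt path algebra of a graph `E` is graded exchange (for every
homogeneous `x` there is an idempotent `u` in the 0-component with `u ∈ x·L`
and `u ∈ x ∘ L`), then `E` is a no-exit graph: no cycle in `E` has an exit. -/
theorem stmt_19 (K : Type) [Field K] (G : LPAGraph)
    (hExch : ∀ n : ℤ, ∀ x ∈ component K G n, ∃ u ∈ component K G 0,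
      u * u = u ∧ (∃ r ∈ lpa K G, u = x * r) ∧
      (∃ s ∈ lpa K G, u = x + s - x * s)) :
    ∀ (c : List G.E) (hc : c ≠ []), IsPath G c →
      G.r (c.getLast hc) = G.s (c.head hc) →
      (c.map G.s).Nodup →
      ∀ f : G.E, (∃ e ∈ c, G.s f = G.s e) → f ∈ c := by
  intro c hc hpath hclosed _ f hex
  obtain ⟨e, hec, hsf⟩ := hex
  obtain ⟨l1, l2, rfl⟩ := List.append_of_mem hec
  have hclosed' : ∀ a : G.E, (l1 ++ e :: l2).getLast? = some a →
      ∀ b : G.E, (l1 ++ e :: l2).head? = some b → G.r a = G.s b := by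
    intro a ha b hb
    rw [List.getLast?_eq_getLast hc] at ha
    rw [List.head?_eq_head hc] at hb
    rw [← Option.some.inj ha, ← Option.some.inj hb]
    exact hclosed
  obtain ⟨h1, h2, h3⟩ := List.isChain_append.mp hpath
  set d : List G.E := e :: (l2 ++ l1) with hdd
  have hd : d ≠ [] := by simp [hdd]
  have hdpath : IsPath G d := by
    rw [IsPath, hdd]
    unfold List.Chain'
    rw [List.isChain_cons]
    constructor
    · intro y hy
      rcases eq_or_ne l2 [] with rfl | hl2
      · simp only [List.nil_append] at hy
        have hl1 : l1 ≠ [] := by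
          intro hcon; rw [hcon] at hy; simp at hy
        have hd1 : (l1 ++ e :: ([] : List G.E)).getLast? = some e := by
          rw [List.getLast?_append_cons]; rfl
        have hd2 : (l1 ++ e :: ([] : List G.E)).head? = some y := by
          rw [List.head?_append_of_ne_nil _ hl1]
          exact Option.mem_def.mp hy
        exact hclosed' e hd1 y hd2
      · rw [List.head?_append_of_ne_nil _ hl2] at hy
        exact (List.isChain_cons.mp h2).1 y hy
    · apply List.isChain_append.mpr
      refine ⟨(List.isChain_cons.mp h2).2, h1, ?_⟩
      intro x hx y hy
      have hl1 : l1 ≠ [] := by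
        intro hcon; rw [hcon] at hy; simp at hy
      have hl2 : l2 ≠ [] := by
        intro hcon; rw [hcon] at hx; simp at hx
      have hd1 : (l1 ++ e :: l2).getLast? = some x := by
        rw [List.getLast?_append_cons,
          show e :: l2 = [e] ++ l2 from rfl,
          List.getLast?_append_of_ne_nil _ hl2]
        exact Option.mem_def.mp hx
      have hd2 : (l1 ++ e :: l2).head? = some y := by
        rw [List.head?_append_of_ne_nil _ hl1]
        exact Option.mem_def.mp hy
      exact hclosed' x hd1 y hd2
  have hdclosed : ∀ a : G.E, d.getLast? = some a → G.r a = G.s e := by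
    intro a ha
    rcases eq_or_ne l1 [] with rfl | hl1
    · rw [hdd, List.append_nil] at ha
      have hd2 : (([] : List G.E) ++ e :: l2).head? = some e := rfl
      exact hclosed' a ha e hd2
    · rw [hdd, show e :: (l2 ++ l1) = [e] ++ (l2 ++ l1) from rfl,
        List.getLast?_append_of_ne_nil _ (by simp [hl1]),
        List.getLast?_append_of_ne_nil _ hl1] at ha
      exact h3 a (Option.mem_def.mpr ha) e rfl
  have hfeq : f = e :=
    no_exit_head K G hExch d hd hdpath e rfl hdclosed f hsf
  rw [hfeq]
  exact hec
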